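/- Let σ = τ₁τ₂⋯τ_k ∈ S_n be a product of k pairwise disjoint cycles of length d with Fix(σ) = ∅, and let π, π' ∈ S_n satisfy π² = (π')² = 1, πσπ⁻¹ = σ⁻¹ and π'σ(π')⁻¹ = σ⁻¹. If π and π' are conjugate in S_n and their images under the induced homomorphism H_σ → H_σ/K_{H_σ} ≅ S_k have the same cycle type in S_k, then there exists ρ ∈ Cent₀(σ) such that ρπρ⁻¹ = π'. -/

import Mathlib

open Equiv Equiv.Perm Finset

/-- The "non-trivial centralizer" `Cent₀(σ)`: permutations commuting with `σ`
whose support is contained in the support of `σ`. -/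
def Cent0 {n : ℕ} (σ : Equiv.Perm (Fin n)) : Subgroup (Equiv.Perm (Fin n)) where
  carrier := {π | Commute π σ ∧ π.support ⊆ σ.support}
  one_mem' := ⟨Commute.one_left σ, by simp⟩
  mul_mem' := by
    intro a b ha hb
    exact ⟨ha.1.mul_left hb.1, (Equiv.Perm.support_mul_le a b).trans (sup_le ha.2 hb.2)⟩
  inv_mem' := by
    intro a ha
    exact ⟨ha.1.inv_left, by rw [Equiv.Perm.support_inv]; exact ha.2⟩

/-- The product `∏_{i ∈ s} τᵢ^{zᵢ}` of powers of pairwise disjoint permutations. -/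
def Kprod {n k : ℕ} (τ : Fin k → Equiv.Perm (Fin n))
    (hdisj : ∀ i j, i ≠ j → Equiv.Perm.Disjoint (τ i) (τ j))
    (s : Finset (Fin k)) (z : Fin k → ℤ) : Equiv.Perm (Fin n) :=
  s.noncommProd (fun i => τ i ^ z i)
    (fun a _ b _ hab => Commute.zpow_zpow ((hdisj a b hab).commute) _ _)

/-- The subgroup `H_σ = { x ∈ S_{X_σ} : xσx⁻¹ = σ^z for some integer z }`, as a set. -/
def Hgrp {n : ℕ} (σ : Equiv.Perm (Fin n)) : Set (Equiv.Perm (Fin n)) :=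
  {x | x.support ⊆ σ.support ∧ ∃ z : ℤ, x * σ * x⁻¹ = σ ^ z}


namespace DihedralAux

/-! ### ZMod solvability lemmas -/

lemma sol_sub_of_sol {d : ℕ} {a b : ZMod d} (ha : ∃ x, x + x = a) (hb : ∃ x, x + x = b) :
    ∃ x, x + x = a - b := by
  obtain ⟨x, hx⟩ := ha; obtain ⟨y, hy⟩ := hb
  exact ⟨x - y, by rw [← hx, ← hy]; ring⟩

lemma sol_of_odd {d : ℕ} [NeZero d] (hd : ¬ 2 ∣ d) (a : ZMod d) : ∃ x, x + x = a := by
  have h2 : IsUnit (2 : ZMod d) := by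
    have := (ZMod.isUnit_iff_coprime 2 d).mpr ((Nat.prime_two.coprime_iff_not_dvd).mpr hd)
    simpa using this
  obtain ⟨u, hu⟩ := h2
  refine ⟨↑u⁻¹ * a, ?_⟩
  have h : (2 : ZMod d) * (↑u⁻¹ * a) = a := by
    rw [← hu, ← mul_assoc, Units.mul_inv, one_mul]
  linear_combination h

lemma sol_iff {d : ℕ} [NeZero d] (hd : 2 ∣ d) (a : ZMod d) :
    (∃ x, x + x = a) ↔ (ZMod.castHom hd (ZMod 2)) a = 0 := by
  constructor
  · rintro ⟨x, rfl⟩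
    rw [map_add]
    have : ∀ y : ZMod 2, y + y = 0 := by decide
    exact this _
  · intro h
    rw [ZMod.castHom_apply, ← ZMod.natCast_val, ZMod.natCast_eq_zero_iff] at h
    obtain ⟨m, hm⟩ := h
    refine ⟨(m : ZMod d), ?_⟩
    have : ((a.val : ℕ) : ZMod d) = a := ZMod.natCast_rightInverse a
    rw [← this, hm]
    push_cast
    ring

lemma sol_sub_of_not_not {d : ℕ} [NeZero d] {a b : ZMod d}
    (ha : ¬ ∃ x, x + x = a) (hb : ¬ ∃ x, x + x = b) : ∃ x, x + x = a - b := by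
  by_cases hd : 2 ∣ d
  · have hone : ∀ y : ZMod 2, y ≠ 0 → y = 1 := by decide
    have h1 : (ZMod.castHom hd (ZMod 2)) a = 1 :=
      hone _ (fun h => ha ((sol_iff hd a).mpr h))
    have h2 : (ZMod.castHom hd (ZMod 2)) b = 1 :=
      hone _ (fun h => hb ((sol_iff hd b).mpr h))
    refine (sol_iff hd _).mpr ?_
    rw [map_sub, h1, h2, sub_self]
  · exact absurd (sol_of_odd hd a) ha

lemma card_sol {d : ℕ} [NeZero d] (a : ZMod d) :
    (univ.filter fun x : ZMod d => x + x = a).card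
      = if ∃ x, x + x = a then (univ.filter fun x : ZMod d => x + x = 0).card else 0 := by
  split_ifs with h
  · obtain ⟨x₀, hx₀⟩ := h
    apply Finset.card_bij (fun x _ => x - x₀)
    · intro x hx
      simp only [mem_filter, mem_univ, true_and] at hx ⊢
      linear_combination hx - hx₀
    · intro x₁ h₁ x₂ h₂ h
      exact sub_left_injective h
    · intro y hy
      simp only [mem_filter, mem_univ, true_and] at hy
      exact ⟨y + x₀, by simp only [mem_filter, mem_univ, true_and]; linear_combination hy + hx₀,
        by ring⟩
  · rw [Finset.card_eq_zero, Finset.filter_eq_empty_iff]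
    intro x _
    exact fun hx => h ⟨x, hx⟩

/-! ### Extending a bijection between finsets to a permutation -/

lemma exists_perm_image_aux {α : Type*} [Fintype α] [DecidableEq α] :
    ∀ (m : ℕ) (C B A : Finset α), B.card = m → B ⊆ C → A ⊆ C → B.card = A.card →
    ∃ u : Perm α, u.support ⊆ C ∧ B.image u = A := by
  intro m
  induction m with
  | zero =>
    intro C B A hBm hBC hAC hBA
    have hB : B = ∅ := card_eq_zero.mp hBm
    have hA : A = ∅ := card_eq_zero.mp (by rw [← hBA, hBm])
    exact ⟨1, by simp, by simp [hB, hA]⟩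
  | succ n ih =>
    intro C B A hBm hBC hAC hBA
    obtain ⟨x, hx⟩ := card_pos.mp (by rw [hBm]; exact n.succ_pos)
    obtain ⟨y, hy⟩ := card_pos.mp (by rw [← hBA, hBm]; exact n.succ_pos)
    obtain ⟨u', hu'supp, hu'img⟩ := ih C (B.erase x) (A.erase y)
      (by rw [card_erase_of_mem hx, hBm]; rfl)
      ((erase_subset x B).trans hBC) ((erase_subset y A).trans hAC)
      (by rw [card_erase_of_mem hx, card_erase_of_mem hy, hBA])
    set u : Perm α := Equiv.swap (u' x) y * u' with hu
    have hux : u' x ∈ C := by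
      by_cases hxs : x ∈ u'.support
      · exact hu'supp (apply_mem_support.mpr hxs)
      · rw [notMem_support.mp hxs]; exact hBC hx
    have hswsupp : (Equiv.swap (u' x) y).support ⊆ C := by
      intro z hz
      rw [mem_support] at hz
      by_cases h1 : z = u' x
      · subst h1; exact hux
      · by_cases h2 : z = y
        · subst h2; exact hAC hy
        · exact absurd (Equiv.swap_apply_of_ne_of_ne h1 h2) hz
    have hkey : ∀ b ∈ B.erase x, u b = u' b := by
      intro b hb
      have hbx : b ≠ x := ne_of_mem_erase hb
      have h1 : u' b ∈ A.erase y := by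
        rw [← hu'img]; exact mem_image_of_mem u' hb
      show (Equiv.swap (u' x) y) (u' b) = u' b
      apply Equiv.swap_apply_of_ne_of_ne
      · exact fun h => hbx (u'.injective h)
      · exact ne_of_mem_erase h1
    refine ⟨u, ?_, ?_⟩
    · exact (support_mul_le _ _).trans (sup_le hswsupp hu'supp)
    · have hux' : u x = y := by
        show (Equiv.swap (u' x) y) (u' x) = y
        exact Equiv.swap_apply_left _ _
      calc B.image u = (insert x (B.erase x)).image u := by rw [insert_erase hx]
        _ = insert (u x) ((B.erase x).image u) := image_insert _ _ _
        _ = insert y ((B.erase x).image u') := by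
            rw [hux', image_congr (fun b hb => hkey b hb)]
        _ = insert y (A.erase y) := by rw [hu'img]
        _ = A := insert_erase hy

lemma exists_perm_image {α : Type*} [Fintype α] [DecidableEq α] (C B A : Finset α)
    (hBC : B ⊆ C) (hAC : A ⊆ C) (hBA : B.card = A.card) :
    ∃ u : Perm α, u.support ⊆ C ∧ B.image u = A :=
  exists_perm_image_aux B.card C B A rfl hBC hAC hBA

/-! ### permCongr as a group homomorphism -/

lemma permCongr_mul {α β : Type*} (e : α ≃ β) (p q : Perm α) :
    e.permCongr (p * q) = e.permCongr p * e.permCongr q := by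
  ext x
  simp [Equiv.permCongr_apply, Perm.mul_apply]

lemma permCongr_one {α β : Type*} (e : α ≃ β) : e.permCongr (1 : Perm α) = 1 := by
  ext x; simp

lemma permCongr_inv {α β : Type*} (e : α ≃ β) (p : Perm α) :
    e.permCongr p⁻¹ = (e.permCongr p)⁻¹ := by
  apply eq_inv_of_mul_eq_one_left
  rw [← permCongr_mul, inv_mul_cancel, permCongr_one]



variable {k d : ℕ}

/-- The model of an `σ`-inverting involution: `(i, j) ↦ (g i, c i - j)`. -/
def mkP (g : Perm (Fin k)) (c : Fin k → ZMod d) : Perm (Fin k × ZMod d) where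
  toFun p := (g p.1, c p.1 - p.2)
  invFun p := (g⁻¹ p.1, c (g⁻¹ p.1) - p.2)
  left_inv p := by simp
  right_inv p := by simp

/-- The model of a centralizer element: `(i, j) ↦ (s i, j + b i)`. -/
def mkR (s : Perm (Fin k)) (b : Fin k → ZMod d) : Perm (Fin k × ZMod d) where
  toFun p := (s p.1, p.2 + b p.1)
  invFun p := (s⁻¹ p.1, p.2 - b (s⁻¹ p.1))
  left_inv p := by simp
  right_inv p := by simp

@[simp] lemma mkP_apply (g : Perm (Fin k)) (c : Fin k → ZMod d) (p : Fin k × ZMod d) :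
    mkP g c p = (g p.1, c p.1 - p.2) := rfl

@[simp] lemma mkR_apply (s : Perm (Fin k)) (b : Fin k → ZMod d) (p : Fin k × ZMod d) :
    mkR s b p = (s p.1, p.2 + b p.1) := rfl

lemma mkR_comm_shift (s : Perm (Fin k)) (b : Fin k → ZMod d) :
    mkR s b * mkR 1 (fun _ => 1) = mkR 1 (fun _ => 1) * mkR s b := by
  ext p
  · simp [Perm.mul_apply]
  · simp [Perm.mul_apply]; ring

section Model
variable [NeZero d]

lemma card_fix_mkP (g : Perm (Fin k)) (c : Fin k → ZMod d) :
    (univ.filter fun p : Fin k × ZMod d => mkP g c p = p).card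
      = (univ.filter fun x : ZMod d => x + x = 0).card
        * (univ.filter fun i => g i = i ∧ ∃ x : ZMod d, x + x = c i).card := by
  rw [card_eq_sum_card_fiberwise (f := Prod.fst) (t := univ) (fun p _ => mem_univ p.1)]
  have hpt : ∀ i : Fin k,
      ((univ.filter fun p : Fin k × ZMod d => mkP g c p = p).filter fun p => p.1 = i).card
      = if g i = i ∧ ∃ x : ZMod d, x + x = c i
        then (univ.filter fun x : ZMod d => x + x = 0).card else 0 := by
    intro i
    have himg : ((univ.filter fun p : Fin k × ZMod d => mkP g c p = p).filter fun p => p.1 = i)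
        = ((univ.filter fun j : ZMod d => g i = i ∧ j + j = c i)).image (Prod.mk i) := by
      ext ⟨i', j⟩
      rw [mem_filter, mem_filter, mem_image]
      simp only [mem_filter, mem_univ, true_and, mkP_apply, Prod.mk.injEq]
      constructor
      · rintro ⟨⟨h1, h2⟩, rfl⟩
        exact ⟨j, ⟨h1, by linear_combination -h2⟩, rfl, rfl⟩
      · rintro ⟨j₀, ⟨h1, h2⟩, rfl, rfl⟩
        exact ⟨⟨h1, by linear_combination -h2⟩, rfl⟩
    rw [himg, card_image_of_injective _ (fun a b h => by simpa using h)]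
    by_cases hgi : g i = i
    · simp only [hgi, eq_self_iff_true, true_and]
      exact card_sol (c i)
    · simp [hgi]
  rw [Finset.sum_congr rfl (fun i _ => hpt i)]
  have hite : ∀ i ∈ (univ : Finset (Fin k)),
      (if g i = i ∧ ∃ x : ZMod d, x + x = c i
        then (univ.filter fun x : ZMod d => x + x = 0).card else 0)
      = if i ∈ (univ.filter fun i => g i = i ∧ ∃ x : ZMod d, x + x = c i)
        then (univ.filter fun x : ZMod d => x + x = 0).card else 0 := by
    intro i _
    simp [mem_filter]
  rw [Finset.sum_congr rfl hite, sum_ite_mem, univ_inter, sum_const, smul_eq_mul, mul_comm]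

theorem model_conj (g g' : Perm (Fin k)) (c c' : Fin k → ZMod d)
    (hgg : ∀ i, g (g i) = i)
    (hcg : ∀ i, c (g i) = c i) (hcg' : ∀ i, c' (g' i) = c' i)
    (hct : g.cycleType = g'.cycleType)
    (hfix : (univ.filter fun p : Fin k × ZMod d => mkP g c p = p).card
          = (univ.filter fun p : Fin k × ZMod d => mkP g' c' p = p).card) :
    ∃ s b, mkR s b * mkP g c * (mkR s b)⁻¹ = mkP g' c' := by
  classical
  have hm : 0 < (univ.filter fun x : ZMod d => x + x = 0).card :=
    card_pos.mpr ⟨0, by simp⟩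
  set A := univ.filter fun i => g i = i ∧ ∃ x : ZMod d, x + x = c i with hA
  set A' := univ.filter fun i => g' i = i ∧ ∃ x : ZMod d, x + x = c' i with hA'
  have hAA' : A.card = A'.card := by
    apply Nat.eq_of_mul_eq_mul_left hm
    rw [← card_fix_mkP g c, ← card_fix_mkP g' c', hfix]
  obtain ⟨s₀, hs₀⟩ := isConj_iff.mp (isConj_iff_cycleType_eq.mpr hct)
  have hs₀g : ∀ i, s₀ (g i) = g' (s₀ i) := by
    intro i
    rw [← hs₀]
    simp [Perm.mul_apply]
  set C := univ.filter fun i => g' i = i with hC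
  have hBC : A.image s₀ ⊆ C := by
    intro j hj
    obtain ⟨i, hi, rfl⟩ := mem_image.mp hj
    rw [hA, mem_filter] at hi
    rw [hC, mem_filter]
    refine ⟨mem_univ _, ?_⟩
    rw [← hs₀g i, hi.2.1]
  have hA'C : A' ⊆ C := by
    intro i hi
    rw [hA', mem_filter] at hi
    rw [hC, mem_filter]
    exact ⟨mem_univ _, hi.2.1⟩
  obtain ⟨u, husupp, huimg⟩ := exists_perm_image C (A.image s₀) A' hBC hA'C
    (by rw [card_image_of_injective _ s₀.injective, hAA'])
  have hug' : Commute u g' := by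
    apply Equiv.Perm.Disjoint.commute
    rw [disjoint_iff_disjoint_support]
    refine Finset.disjoint_left.mpr ?_
    intro i hi hig'
    have hiC := husupp hi
    rw [hC, mem_filter] at hiC
    rw [mem_support] at hig'
    exact hig' hiC.2
  set s := u * s₀ with hs
  have hsg : ∀ i, s (g i) = g' (s i) := by
    intro i
    show u (s₀ (g i)) = g' (u (s₀ i))
    rw [hs₀g]
    calc u (g' (s₀ i)) = (u * g') (s₀ i) := rfl
      _ = (g' * u) (s₀ i) := by rw [hug'.eq]
      _ = g' (u (s₀ i)) := rfl
  have hsimg : A.image s = A' := by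
    rw [← huimg, hs]
    rw [show ⇑(u * s₀) = ⇑u ∘ ⇑s₀ from rfl, ← Finset.image_image]
  have hmemA' : ∀ i, i ∈ A ↔ s i ∈ A' := by
    intro i
    constructor
    · intro h
      rw [← hsimg]
      exact mem_image_of_mem s h
    · intro h
      rw [← hsimg] at h
      obtain ⟨a, ha, hai⟩ := mem_image.mp h
      exact (s.injective hai) ▸ ha
  have hfixmap : ∀ i, g i = i → g' (s i) = s i := fun i h => by rw [← hsg, h]
  have hsol : ∀ i, g i = i → ∃ x : ZMod d, x + x = c' (s i) - c i := by
    intro i hgi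
    by_cases hiA : i ∈ A
    · have h1 : ∃ x : ZMod d, x + x = c i := ((mem_filter.mp hiA).2).2
      have h2 : s i ∈ A' := (hmemA' i).mp hiA
      have h3 : ∃ x : ZMod d, x + x = c' (s i) := ((mem_filter.mp h2).2).2
      exact sol_sub_of_sol h3 h1
    · have h1 : ¬ ∃ x : ZMod d, x + x = c i := fun hcon =>
        hiA (mem_filter.mpr ⟨mem_univ _, hgi, hcon⟩)
      have h2 : s i ∉ A' := fun hcon => hiA ((hmemA' i).mpr hcon)
      have h3 : ¬ ∃ x : ZMod d, x + x = c' (s i) := fun hcon =>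
        h2 (mem_filter.mpr ⟨mem_univ _, hfixmap i hgi, hcon⟩)
      exact sol_sub_of_not_not h3 h1
  set b : Fin k → ZMod d := fun i =>
    if h : g i = i then (hsol i h).choose
    else if i < g i then 0 else c' (s (g i)) - c (g i) with hbdef
  have hb : ∀ i, b i + b (g i) = c' (s i) - c i := by
    intro i
    by_cases h : g i = i
    · have hspec := (hsol i h).choose_spec
      rw [h, hbdef]
      simp only [dif_pos h]
      exact hspec
    · have hne : i ≠ g i := fun hh => h hh.symm
      have hggi : g (g i) = i := hgg i
      have hgine : g (g i) ≠ g i := by rw [hggi]; exact hne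
      rcases lt_or_gt_of_ne hne with hlt | hgt
      · have hbi : b i = 0 := by
          rw [hbdef]
          simp only [dif_neg h, if_pos hlt]
        have hbgi : b (g i) = c' (s i) - c i := by
          rw [hbdef]
          simp only [dif_neg hgine]
          rw [if_neg (by rw [hggi]; exact not_lt.mpr hlt.le), hggi]
        rw [hbi, hbgi, zero_add]
      · have hbi : b i = c' (s i) - c i := by
          rw [hbdef]
          simp only [dif_neg h, if_neg (not_lt.mpr hgt.le)]
          rw [hsg, hcg', hcg]
        have hbgi : b (g i) = 0 := by
          rw [hbdef]
          simp only [dif_neg hgine]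
          rw [if_pos (by rw [hggi]; exact hgt)]
        rw [hbi, hbgi, add_zero]
  refine ⟨s, b, ?_⟩
  rw [mul_inv_eq_iff_eq_mul]
  apply Equiv.ext
  rintro ⟨i, j⟩
  simp only [Perm.mul_apply, mkP_apply, mkR_apply, Prod.mk.injEq]
  refine ⟨hsg i, ?_⟩
  linear_combination hb i

end Model


lemma listprod_fix {α : Type*} (l : List (Perm α)) (x : α) (h : ∀ p ∈ l, p x = x) :
    l.prod x = x := by
  induction l with
  | nil => simp
  | cons q t ih =>
    rw [List.prod_cons, Perm.mul_apply, ih (fun p hp => h p (List.mem_cons_of_mem q hp)),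
      h q List.mem_cons_self]

lemma listprod_apply_mem {α : Type*} [DecidableEq α] [Fintype α] (l : List (Perm α))
    (hl : l.Pairwise Perm.Disjoint) (p : Perm α) (hp : p ∈ l) (x : α) (hx : x ∈ p.support) :
    l.prod x = p x := by
  induction l with
  | nil => cases hp
  | cons q t ih =>
    rw [List.pairwise_cons] at hl
    obtain ⟨hq, ht⟩ := hl
    rw [List.prod_cons, Perm.mul_apply]
    rcases List.mem_cons.mp hp with rfl | hpt
    · rw [listprod_fix]
      intro r hr
      rcases (hq r hr) x with h | h
      · exact absurd h (mem_support.mp hx)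
      · exact h
    · rw [ih ht hpt]
      have h1 : p x ∈ p.support := apply_mem_support.mpr hx
      rcases (hq p hpt) (p x) with h | h
      · exact h
      · exact absurd h (mem_support.mp h1)

end DihedralAux

open DihedralAux in
theorem dihedral_conjugate_in_cent0'
    {n k d : ℕ} (σ : Equiv.Perm (Fin n)) (τ : Fin k → Equiv.Perm (Fin n))
    (hcyc : ∀ i, (τ i).IsCycle) (hlen : ∀ i, (τ i).support.card = d)
    (hdisj : ∀ i j, i ≠ j → Equiv.Perm.Disjoint (τ i) (τ j))
    (hσ : σ = (List.ofFn τ).prod)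
    (hfix : ∀ x : Fin n, σ x ≠ x)
    (π π' : Equiv.Perm (Fin n))
    (hπ2 : π ^ 2 = 1) (hπ'2 : π' ^ 2 = 1)
    (hπσ : π * σ * π⁻¹ = σ⁻¹) (hπ'σ : π' * σ * π'⁻¹ = σ⁻¹)
    (g g' : Equiv.Perm (Fin k))
    (hg : ∀ i : Fin k, ∀ p ∈ (τ i).support, π p ∈ (τ (g i)).support)
    (hg' : ∀ i : Fin k, ∀ p ∈ (τ i).support, π' p ∈ (τ (g' i)).support)
    (hconj : IsConj π π')
    (hct : g.cycleType = g'.cycleType) :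
    ∃ ρ : Equiv.Perm (Fin n), (Commute ρ σ ∧ ρ.support ⊆ σ.support) ∧ ρ * π * ρ⁻¹ = π' := by
  classical
  rcases Nat.eq_zero_or_pos n with hn | hn
  · subst hn
    have hππ' : π = π' := by ext x; exact x.elim0
    exact ⟨1, ⟨Commute.one_left σ, by simp⟩, by simp [hππ']⟩
  have hk : k ≠ 0 := by
    rintro rfl
    have hσ1 : σ = 1 := by rw [hσ, List.ofFn_zero, List.prod_nil]
    exact hfix ⟨0, hn⟩ (by rw [hσ1]; rfl)
  have hd2 : 2 ≤ d := by
    have i : Fin k := ⟨0, Nat.pos_of_ne_zero hk⟩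
    rw [← hlen i]
    exact (hcyc i).two_le_card_support
  haveI : NeZero d := ⟨by omega⟩
  haveI : Fact (1 < d) := ⟨hd2⟩
  have hpair : (List.ofFn τ).Pairwise Perm.Disjoint := by
    rw [List.pairwise_ofFn]
    exact fun i j hij => hdisj i j (ne_of_lt hij)
  have hστ : ∀ (i) (x), x ∈ (τ i).support → σ x = τ i x := by
    intro i x hx
    rw [hσ]
    exact listprod_apply_mem _ hpair (τ i) (List.mem_ofFn.mpr ⟨i, rfl⟩) x hx
  have ho : ∀ i, orderOf (τ i) = d := fun i => by rw [(hcyc i).orderOf, hlen i]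
  have ha : ∀ i : Fin k, ∃ x, x ∈ (τ i).support := by
    intro i
    have := Finset.card_pos.mp (show 0 < (τ i).support.card by rw [hlen i]; omega)
    exact this
  choose a haa using ha
  let f : Fin k × ZMod d → Fin n := fun p => ((τ p.1) ^ (p.2.val : ℕ)) (a p.1)
  have hfsupp : ∀ p : Fin k × ZMod d, f p ∈ (τ p.1).support :=
    fun p => pow_apply_mem_support.mpr (haa p.1)
  have huniq : ∀ (x : Fin n) (i j : Fin k), x ∈ (τ i).support → x ∈ (τ j).support → i = j := by
    intro x i j hi hj
    by_contra hij
    exact absurd hj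
      (Finset.disjoint_left.mp (disjoint_iff_disjoint_support.mp (hdisj i j hij)) hi)
  have hinj : Function.Injective f := by
    rintro ⟨i, v⟩ ⟨i', w⟩ h
    have hii' : i = i' := huniq _ i i' (hfsupp (i, v)) (h ▸ hfsupp (i', w))
    subst hii'
    have hcl : ∀ v w : ZMod d,
        ((τ i) ^ (v.val)) (a i) = ((τ i) ^ (w.val)) (a i) → v.val ≤ w.val → v = w := by
      intro v w heq hvw
      have hpa : ((τ i) ^ (v.val)) (((τ i) ^ (w.val - v.val)) (a i))
          = ((τ i) ^ (v.val)) (a i) := by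
        rw [← Perm.mul_apply, ← pow_add, show v.val + (w.val - v.val) = w.val from by omega]
        exact heq.symm
      have h1 : ((τ i) ^ (w.val - v.val)) (a i) = a i := ((τ i) ^ (v.val)).injective hpa
      have h2 : (τ i) ^ (w.val - v.val) = 1 :=
        ((hcyc i).pow_eq_one_iff).mpr ⟨a i, mem_support.mp (haa i), h1⟩
      have h3 : d ∣ (w.val - v.val) := by
        have h3' := orderOf_dvd_of_pow_eq_one h2
        rwa [ho i] at h3'
      have h4 : w.val - v.val < d := lt_of_le_of_lt (Nat.sub_le _ _) (ZMod.val_lt w)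
      have h5 : w.val - v.val = 0 := Nat.eq_zero_of_dvd_of_lt h3 h4
      exact ZMod.val_injective d (by omega)
    rcases le_total v.val w.val with hvw | hvw
    · exact Prod.ext rfl (hcl v w h hvw)
    · exact Prod.ext rfl (hcl w v h.symm hvw).symm
  have hsurj : Function.Surjective f := by
    intro x
    have hex : ∃ i, x ∈ (τ i).support := by
      by_contra hcon
      push_neg at hcon
      apply hfix x
      rw [hσ]
      apply listprod_fix
      intro p hp
      obtain ⟨i, rfl⟩ := List.mem_ofFn.mp hp
      exact notMem_support.mp (hcon i)
    obtain ⟨i, hxi⟩ := hex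
    obtain ⟨m, hm⟩ := (hcyc i).exists_pow_eq (mem_support.mp (haa i)) (mem_support.mp hxi)
    refine ⟨(i, (m : ZMod d)), ?_⟩
    show ((τ i) ^ (((m : ZMod d)).val)) (a i) = x
    have hmod : (τ i) ^ (m % d) = (τ i) ^ m := by
      rw [← ho i]; exact pow_mod_orderOf _ _
    rw [ZMod.val_natCast, hmod, hm]
  let F : (Fin k × ZMod d) ≃ Fin n := Equiv.ofBijective f ⟨hinj, hsurj⟩
  let e : Fin n ≃ (Fin k × ZMod d) := F.symm
  have heF : ∀ p, e (f p) = p := fun p => F.symm_apply_apply p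
  have hFe : ∀ x, f (e x) = x := fun x => F.apply_symm_apply x
  have hesymm : ∀ p : Fin k × ZMod d, e.symm p = f p := fun p => rfl
  have hfst : ∀ (x : Fin n) (i : Fin k), x ∈ (τ i).support → (e x).1 = i := by
    intro x i hx
    have h1 := hfsupp (e x)
    rw [hFe x] at h1
    exact huniq x _ i h1 hx
  have hSh : e.permCongr σ = mkR 1 (fun _ => (1 : ZMod d)) := by
    apply Equiv.ext
    rintro ⟨i, j⟩
    rw [Equiv.permCongr_apply, hesymm]
    have h2 : σ (f (i, j)) = f (i, j + 1) := by
      rw [hστ i _ (hfsupp (i, j))]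
      show (τ i) ((τ i ^ (j.val)) (a i)) = (τ i ^ ((j + 1).val)) (a i)
      have hmod : (τ i) ^ ((j.val + 1) % d) = (τ i) ^ (j.val + 1) := by
        have hd' : (j.val + 1) % d = (j.val + 1) % orderOf (τ i) := by rw [ho i]
        rw [hd']
        exact pow_mod_orderOf _ _
      rw [ZMod.val_add, ZMod.val_one, hmod, pow_succ', Perm.mul_apply]
    rw [h2, heF]
    simp only [mkR_apply, Perm.one_apply]
  have main : ∀ (π₀ : Perm (Fin n)) (g₀ : Perm (Fin k)),
      (∀ i : Fin k, ∀ p ∈ (τ i).support, π₀ p ∈ (τ (g₀ i)).support) →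
      (π₀ * σ * π₀⁻¹ = σ⁻¹) →
      ∃ c₀ : Fin k → ZMod d, e.permCongr π₀ = mkP g₀ c₀ := by
    intro π₀ g₀ hg₀ hπ₀σ
    set P := e.permCongr π₀ with hP
    have hPfst : ∀ p : Fin k × ZMod d, (P p).1 = g₀ p.1 := by
      rintro ⟨i, j⟩
      rw [hP, Equiv.permCongr_apply, hesymm]
      exact hfst _ _ (hg₀ i _ (hfsupp (i, j)))
    have hPSh : P * (mkR 1 (fun _ => (1:ZMod d)))
        = (mkR 1 (fun _ => (1:ZMod d)))⁻¹ * P := by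
      rw [← hSh, hP, ← DihedralAux.permCongr_mul, ← DihedralAux.permCongr_inv, ← DihedralAux.permCongr_mul]
      congr 1
      rw [← hπ₀σ]
      group
    have hShinv : ∀ p : Fin k × ZMod d,
        (mkR 1 (fun _ => (1:ZMod d)))⁻¹ p = (p.1, p.2 - 1) := by
      rintro ⟨i, j⟩
      rfl
    have hnat : ∀ (i : Fin k) (m : ℕ), P (i, (m : ZMod d)) = (g₀ i, (P (i, 0)).2 - m) := by
      intro i m
      induction m with
      | zero =>
        simp only [Nat.cast_zero, sub_zero]
        exact Prod.ext (hPfst (i, 0)) rfl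
      | succ m ihm =>
        have h1 : ((m + 1 : ℕ) : ZMod d) = (m : ZMod d) + 1 := by push_cast; ring
        have h2 : (mkR 1 (fun _ => (1:ZMod d))) (i, (m : ZMod d)) = (i, (m : ZMod d) + 1) := by
          simp only [mkR_apply, Perm.one_apply]
        rw [h1, ← h2, ← Perm.mul_apply, hPSh, Perm.mul_apply, ihm, hShinv]
        refine Prod.ext rfl ?_
        show (P (i, 0)).2 - (m : ZMod d) - 1 = (P (i, 0)).2 - ((m : ZMod d) + 1)
        ring
    refine ⟨fun i => (P (i, 0)).2, ?_⟩
    apply Equiv.ext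
    rintro ⟨i, j⟩
    obtain ⟨m, rfl⟩ : ∃ m : ℕ, (m : ZMod d) = j := ⟨j.val, ZMod.natCast_rightInverse j⟩
    rw [hnat i m]
    simp only [mkP_apply]
  obtain ⟨c, hPc⟩ := main π g hg hπσ
  obtain ⟨c', hPc'⟩ := main π' g' hg' hπ'σ
  have invfacts : ∀ (π₀ : Perm (Fin n)) (g₀ : Perm (Fin k)) (c₀ : Fin k → ZMod d),
      e.permCongr π₀ = mkP g₀ c₀ → π₀ ^ 2 = 1 →
      (∀ i, g₀ (g₀ i) = i) ∧ (∀ i, c₀ (g₀ i) = c₀ i) := by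
    intro π₀ g₀ c₀ hPc₀ hπ₀2
    have hP2 : mkP g₀ c₀ * mkP g₀ c₀ = 1 := by
      rw [← hPc₀, ← DihedralAux.permCongr_mul, ← sq, hπ₀2, DihedralAux.permCongr_one]
    have hpt : ∀ i : Fin k, mkP g₀ c₀ (mkP g₀ c₀ (i, 0)) = (i, (0 : ZMod d)) := by
      intro i
      rw [← Perm.mul_apply, hP2, Perm.one_apply]
    constructor
    · intro i
      have h1 := congrArg Prod.fst (hpt i)
      simpa only [mkP_apply] using h1
    · intro i
      have h2 := congrArg Prod.snd (hpt i)
      simp only [mkP_apply] at h2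
      linear_combination h2
  obtain ⟨hgg, hcg⟩ := invfacts π g c hPc hπ2
  obtain ⟨hg'g', hcg'⟩ := invfacts π' g' c' hPc' hπ'2
  have htrans : ∀ (π₀ : Perm (Fin n)) (Q : Perm (Fin k × ZMod d)), e.permCongr π₀ = Q →
      (univ.filter fun p : Fin k × ZMod d => Q p = p).card
        = (univ.filter fun x : Fin n => π₀ x = x).card := by
    intro π₀ Q hQ
    apply Finset.card_bij (fun p _ => e.symm p)
    · intro p hp
      rw [mem_filter] at hp ⊢
      refine ⟨mem_univ _, ?_⟩
      have h1 := hp.2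
      rw [← hQ, Equiv.permCongr_apply] at h1
      have h2 := congrArg e.symm h1
      rwa [Equiv.symm_apply_apply] at h2
    · intro p₁ _ p₂ _ h
      exact e.symm.injective h
    · intro x hx
      rw [mem_filter] at hx
      refine ⟨e x, mem_filter.mpr ⟨mem_univ _, ?_⟩, e.symm_apply_apply x⟩
      rw [← hQ, Equiv.permCongr_apply, Equiv.symm_apply_apply, hx.2]
  have hfixcard : (univ.filter fun p : Fin k × ZMod d => mkP g c p = p).card
      = (univ.filter fun p : Fin k × ZMod d => mkP g' c' p = p).card := by
    rw [htrans π _ hPc, htrans π' _ hPc']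
    obtain ⟨x₀, hx₀⟩ := isConj_iff.mp hconj
    have hsupp : π.support.card = π'.support.card := by
      rw [← hx₀]
      exact (card_support_conj).symm
    have h3 : π.support = univ.filter fun x => ¬ π x = x := by
      ext x; simp [mem_support]
    have h4 : π'.support = univ.filter fun x => ¬ π' x = x := by
      ext x; simp [mem_support]
    rw [h3, h4] at hsupp
    have h1 := Finset.card_filter_add_card_filter_not
      (s := (univ : Finset (Fin n))) (p := fun x => π x = x)
    have h2 := Finset.card_filter_add_card_filter_not
      (s := (univ : Finset (Fin n))) (p := fun x => π' x = x)
    omega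
  obtain ⟨s, b, hsb⟩ := model_conj g g' c c' hgg hcg hcg' hct hfixcard
  set ρ := e.symm.permCongr (mkR s b) with hρ
  have heρ : e.permCongr ρ = mkR s b := by
    apply Equiv.ext
    intro x
    rw [hρ, Equiv.permCongr_apply, Equiv.permCongr_apply]
    simp
  have hcomm : ρ * σ = σ * ρ := by
    apply (e.permCongr).injective
    rw [DihedralAux.permCongr_mul, DihedralAux.permCongr_mul, heρ, hSh, mkR_comm_shift]
  have hconjρ : ρ * π * ρ⁻¹ = π' := by
    apply (e.permCongr).injective
    rw [DihedralAux.permCongr_mul, DihedralAux.permCongr_mul, DihedralAux.permCongr_inv, heρ, hPc, hPc', hsb]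
  have hsuppσ : σ.support = univ := by
    apply Finset.eq_univ_iff_forall.mpr
    intro x
    rw [mem_support]
    exact hfix x
  exact ⟨ρ, ⟨hcomm, by rw [hsuppσ]; exact subset_univ _⟩, hconjρ⟩


/-- `σ = τ₁⋯τ_k` is a product of `k` pairwise disjoint `d`-cycles
without fixed points, and `π, π'` are involutions with `πσπ⁻¹ = π'σ(π')⁻¹ = σ⁻¹`
(hence `π, π' ∈ H_σ`).  Their images under `H_σ → H_σ/K_{H_σ} ≅ S_k` are encoded by
permutations `g, g'` of the cycle indices describing how the supports of the cycles
are permuted.  If `π, π'` are conjugate in `S_n` and `g, g'` have the same cycle type,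
then `ρπρ⁻¹ = π'` for some `ρ ∈ Cent₀(σ)`. -/
theorem dihedral_conjugate_in_cent0
    {n k d : ℕ} (σ : Equiv.Perm (Fin n)) (τ : Fin k → Equiv.Perm (Fin n))
    (hcyc : ∀ i, (τ i).IsCycle) (hlen : ∀ i, (τ i).support.card = d)
    (hdisj : ∀ i j, i ≠ j → Equiv.Perm.Disjoint (τ i) (τ j))
    (hσ : σ = (List.ofFn τ).prod)
    (hfix : ∀ x : Fin n, σ x ≠ x)
    (π π' : Equiv.Perm (Fin n))
    (hπ2 : π ^ 2 = 1) (hπ'2 : π' ^ 2 = 1)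
    (hπσ : π * σ * π⁻¹ = σ⁻¹) (hπ'σ : π' * σ * π'⁻¹ = σ⁻¹)
    -- the images of `π` and `π'` under the induced homomorphism `H_σ → S_k`
    (g g' : Equiv.Perm (Fin k))
    (hg : ∀ i : Fin k, ∀ p ∈ (τ i).support, π p ∈ (τ (g i)).support)
    (hg' : ∀ i : Fin k, ∀ p ∈ (τ i).support, π' p ∈ (τ (g' i)).support)
    (hconj : IsConj π π')
    (hct : g.cycleType = g'.cycleType) :
    ∃ ρ ∈ Cent0 σ, ρ * π * ρ⁻¹ = π' := by
  obtain ⟨ρ, ⟨h1, h2⟩, h3⟩ := dihedral_conjugate_in_cent0' σ τ hcyc hlen hdisj hσ hfix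
    π π' hπ2 hπ'2 hπσ hπ'σ g g' hg hg' hconj hct
  exact ⟨ρ, ⟨h1, h2⟩, h3⟩
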